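/- Let τ = (1 + √5)/2. For every k ∈ ℤ and every n ≥ 1, the quantity ⌈(k+n)/τ⌉ − ⌈k/τ⌉ equals either ⌈n/τ⌉ or ⌊n/τ⌋. Consequently, in any n-letter word of the Fibonacci chain (λ_k) with λ_k = (⌈k/τ⌉ + kτ)/τ², the number of gaps equal to 1 is ⌈n/τ⌉ or ⌊n/τ⌋, and correspondingly the number of gaps equal to 1/τ is ⌊n/τ²⌋ or ⌈n/τ²⌉. -/

import Mathlib

open MeasureTheory Set Filter

noncomputable section

/-- The golden mean `τ = (1 + √5)/2`. -/
def tau : ℝ := (1 + Real.sqrt 5) / 2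

/-- The cut-and-project model set `Σ^Ω = { a + bτ : a, b ∈ ℤ, a - b/τ ∈ Ω }`. -/
def SigmaSet (Ω : Set ℝ) : Set ℝ :=
  {x | ∃ a b : ℤ, x = (a : ℝ) + (b : ℝ) * tau ∧ (a : ℝ) - (b : ℝ) / tau ∈ Ω}

/-- The increasing enumeration `λ_k = (⌈k/τ⌉ + kτ)/τ²` of the rescaled Fibonacci
chain `Σ^{[0,τ²)}`. -/
def fibChain (k : ℤ) : ℝ := ((⌈(k : ℝ) / tau⌉ : ℝ) + (k : ℝ) * tau) / tau ^ 2

lemma sqrt5_sq : Real.sqrt 5 ^ 2 = 5 := Real.sq_sqrt (by norm_num)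

lemma sqrt5_pos : (0:ℝ) < Real.sqrt 5 := Real.sqrt_pos.mpr (by norm_num)

lemma tau_pos : 0 < tau := by unfold tau; positivity

lemma tau_sq : tau ^ 2 = tau + 1 := by unfold tau; nlinarith [sqrt5_sq, sqrt5_pos]

lemma tau_gt_one : 1 < tau := by unfold tau; nlinarith [sqrt5_sq, sqrt5_pos]

lemma irr_tau : Irrational tau := Real.goldenRatio_irrational

lemma irr_ndiv (n : ℕ) (hn : 1 ≤ n) : Irrational ((n:ℝ) / tau) := by
  have h1 : (n:ℝ) / tau = (n:ℝ) * tau - (n:ℝ) := by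
    have := tau_pos
    field_simp
    nlinarith [tau_sq]
  rw [h1]
  exact ((irr_tau.natCast_mul (by omega)).sub_natCast n)

/-- the letter indicator -/
def dd (m : ℤ) : ℤ := ⌈((m:ℝ) + 1) / tau⌉ - ⌈(m:ℝ) / tau⌉

lemma ceil_diff_bounds (x y : ℝ) :
    ⌊y⌋ ≤ ⌈x + y⌉ - ⌈x⌉ ∧ ⌈x + y⌉ - ⌈x⌉ ≤ ⌈y⌉ := by
  constructor
  · have h : (⌈x⌉ : ℤ) + ⌊y⌋ ≤ ⌈x + y⌉ := by
      have : x + (⌊y⌋ : ℝ) ≤ x + y := by linarith [Int.floor_le y]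
      calc (⌈x⌉ : ℤ) + ⌊y⌋ = ⌈x + (⌊y⌋ : ℝ)⌉ := by rw [Int.ceil_add_intCast]
        _ ≤ ⌈x + y⌉ := Int.ceil_le_ceil this
    omega
  · have h : ⌈x + y⌉ ≤ ⌈x⌉ + ⌈y⌉ := Int.ceil_add_le x y
    omega

lemma inv_tau_mem : 0 < 1 / tau ∧ 1 / tau < 1 := by
  constructor
  · have := tau_pos; positivity
  · rw [div_lt_one tau_pos]; exact tau_gt_one

lemma dd_zero_or_one (m : ℤ) : dd m = 0 ∨ dd m = 1 := by
  unfold dd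
  have hx : ((m:ℝ) + 1) / tau = (m:ℝ) / tau + 1 / tau := by ring
  rw [hx]
  have h := ceil_diff_bounds ((m:ℝ)/tau) (1/tau)
  have hf : ⌊(1:ℝ)/tau⌋ = 0 := by
    rw [Int.floor_eq_zero_iff]
    exact ⟨le_of_lt inv_tau_mem.1, inv_tau_mem.2⟩
  have hc : ⌈(1:ℝ)/tau⌉ = 1 := by
    rw [Int.ceil_eq_iff]
    push_cast
    exact ⟨by linarith [inv_tau_mem.1], by linarith [inv_tau_mem.2]⟩
  omega

lemma gap_eq (m : ℤ) : fibChain (m + 1) - fibChain m = ((dd m : ℤ) + tau) / tau ^ 2 := by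
  unfold fibChain dd
  have h2 : (0:ℝ) < tau ^ 2 := pow_pos tau_pos 2
  push_cast
  field_simp
  ring

lemma gap_one_iff (m : ℤ) : fibChain (m + 1) - fibChain m = 1 ↔ dd m = 1 := by
  rw [gap_eq]
  have h2 : (0:ℝ) < tau ^ 2 := pow_pos tau_pos 2
  constructor
  · intro h
    have h3 : (dd m : ℝ) + tau = tau ^ 2 := by
      rw [div_eq_one_iff_eq (ne_of_gt h2)] at h; linarith
    have : (dd m : ℝ) = 1 := by rw [tau_sq] at h3; linarith
    exact_mod_cast this
  · intro h
    rw [h]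
    rw [div_eq_one_iff_eq (ne_of_gt h2)]
    push_cast
    rw [tau_sq]; ring

lemma tele (k : ℤ) (n : ℕ) :
    ∑ i ∈ Finset.range n, dd (k + i) = ⌈((k:ℝ) + (n:ℝ)) / tau⌉ - ⌈(k:ℝ) / tau⌉ := by
  induction n with
  | zero => simp
  | succ n ih =>
    rw [Finset.sum_range_succ, ih]
    unfold dd
    push_cast
    ring

lemma count_eq (k : ℤ) (n : ℕ) :
    (({i : ℕ | i < n ∧
        fibChain (k + (i : ℤ) + 1) - fibChain (k + (i : ℤ)) = 1}).ncard : ℤ) =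
      ⌈((k : ℝ) + (n : ℝ)) / tau⌉ - ⌈(k : ℝ) / tau⌉ := by
  have hset : {i : ℕ | i < n ∧
        fibChain (k + (i : ℤ) + 1) - fibChain (k + (i : ℤ)) = 1} =
      ↑((Finset.range n).filter (fun i : ℕ => dd (k + (i : ℤ)) = 1)) := by
    ext i
    simp only [Set.mem_setOf_eq, Finset.coe_filter, Finset.mem_range, gap_one_iff]
  rw [hset, Set.ncard_coe_finset, ← tele k n]
  have hsum : ∑ i ∈ Finset.range n, dd (k + (i : ℤ)) =
      (((Finset.range n).filter (fun i : ℕ => dd (k + (i : ℤ)) = 1)).card : ℤ) := by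
    rw [← Finset.sum_boole]
    refine Finset.sum_congr rfl fun i _ => ?_
    rcases dd_zero_or_one (k + (i : ℤ)) with h | h <;> simp [h]
  omega

lemma tau_comp (n : ℕ) : (n : ℝ) / tau ^ 2 = -((n : ℝ) / tau) + (n : ℝ) := by
  have h0 := tau_pos
  have h2 : (0:ℝ) < tau ^ 2 := pow_pos tau_pos 2
  field_simp
  linear_combination (-(n:ℝ)) * tau_sq

lemma floor_comp (n : ℕ) : (n : ℤ) - ⌈(n : ℝ) / tau⌉ = ⌊(n : ℝ) / tau ^ 2⌋ := by
  rw [tau_comp, show ((n:ℕ):ℝ) = ((n:ℤ):ℝ) by push_cast; ring, Int.floor_add_intCast,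
    Int.floor_neg]
  ring

lemma ceil_comp (n : ℕ) : (n : ℤ) - ⌊(n : ℝ) / tau⌋ = ⌈(n : ℝ) / tau ^ 2⌉ := by
  rw [tau_comp, show ((n:ℕ):ℝ) = ((n:ℤ):ℝ) by push_cast; ring, Int.ceil_add_intCast,
    Int.ceil_neg]
  ring

/-- `⌈(k+n)/τ⌉ - ⌈k/τ⌉` equals `⌈n/τ⌉` or `⌊n/τ⌋`; consequently any
`n`-letter word of the Fibonacci chain has `⌈n/τ⌉` letters `L` and `⌊n/τ²⌋` letters
`S`, or `⌊n/τ⌋` letters `L` and `⌈n/τ²⌉` letters `S`. -/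
theorem statement12 (k : ℤ) (n : ℕ) (hn : 1 ≤ n) :
    (⌈((k : ℝ) + (n : ℝ)) / tau⌉ - ⌈(k : ℝ) / tau⌉ = ⌈(n : ℝ) / tau⌉ ∨
      ⌈((k : ℝ) + (n : ℝ)) / tau⌉ - ⌈(k : ℝ) / tau⌉ = ⌊(n : ℝ) / tau⌋) ∧
    ((({i : ℕ | i < n ∧
          fibChain (k + (i : ℤ) + 1) - fibChain (k + (i : ℤ)) = 1}).ncard : ℤ) =
            ⌈(n : ℝ) / tau⌉ ∧
        (n : ℤ) - (({i : ℕ | i < n ∧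
          fibChain (k + (i : ℤ) + 1) - fibChain (k + (i : ℤ)) = 1}).ncard : ℤ) =
            ⌊(n : ℝ) / tau ^ 2⌋) ∨
      ((({i : ℕ | i < n ∧
          fibChain (k + (i : ℤ) + 1) - fibChain (k + (i : ℤ)) = 1}).ncard : ℤ) =
            ⌊(n : ℝ) / tau⌋ ∧
        (n : ℤ) - (({i : ℕ | i < n ∧
          fibChain (k + (i : ℤ) + 1) - fibChain (k + (i : ℤ)) = 1}).ncard : ℤ) =
            ⌈(n : ℝ) / tau ^ 2⌉) := by
  have hirr := irr_ndiv n hn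
  have hcf : ⌈(n : ℝ) / tau⌉ = ⌊(n : ℝ) / tau⌋ + 1 := by
    have h1 := Int.ceil_le_floor_add_one ((n : ℝ) / tau)
    have h2 : ⌊(n : ℝ) / tau⌋ < ⌈(n : ℝ) / tau⌉ := by
      refine Int.lt_ceil.mpr (lt_of_le_of_ne (Int.floor_le _) ?_)
      exact fun h => (hirr.ne_int _ h.symm)
    omega
  have hb := ceil_diff_bounds ((k : ℝ) / tau) ((n : ℝ) / tau)
  have hadd : (k : ℝ) / tau + (n : ℝ) / tau = ((k : ℝ) + (n : ℝ)) / tau := by ring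
  rw [hadd] at hb
  have hpart1 : ⌈((k : ℝ) + (n : ℝ)) / tau⌉ - ⌈(k : ℝ) / tau⌉ = ⌈(n : ℝ) / tau⌉ ∨
      ⌈((k : ℝ) + (n : ℝ)) / tau⌉ - ⌈(k : ℝ) / tau⌉ = ⌊(n : ℝ) / tau⌋ := by omega
  have hce := count_eq k n
  rcases hpart1 with h | h
  · left
    refine ⟨Or.inl h, ?_, ?_⟩
    · rw [hce, h]
    · rw [hce, h]; exact floor_comp n
  · right
    refine ⟨?_, ?_⟩
    · rw [hce, h]
    · rw [hce, h]; exact ceil_comp n
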